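/- With blocked direct link and N elements, the BER performance gain of the proposed partitioning over the conventional scheme satisfies P_s^gain = 0.5 − Q(√(α₁γ_b N²)) ≥ 0.5 − 0.5·e^{−α₁γ_b N²/2}, where α₁ = ζ₁² + ζ₂² − √2ζ₁ζ₂ > 0 with ζ₁ = (√3+1−√2)/2, ζ₂ = (√2+1−√3)/2, and γ_b > 0. In particular P_s^gain → 0.5 as N → ∞. -/

import Mathlib

open Real MeasureTheory Filter

/-- The Gaussian Q-function. -/
noncomputable def gaussQ (x : ℝ) : ℝ :=
  ∫ η in Set.Ioi x, (1 / Real.sqrt (2 * Real.pi)) * Real.exp (-η ^ 2 / 2)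

lemma gaussQ_nonneg (x : ℝ) : 0 ≤ gaussQ x := by
  apply setIntegral_nonneg measurableSet_Ioi
  intro y _
  positivity

lemma gaussQ_le (x : ℝ) (hx : 0 ≤ x) : gaussQ x ≤ 0.5 * Real.exp (-x ^ 2 / 2) := by
  have hb : (0:ℝ) < 1/2 := by norm_num
  have hint : Integrable (fun η : ℝ => Real.exp (-(1/2) * η ^ 2)) := integrable_exp_neg_mul_sq hb
  have hc : (0:ℝ) < Real.sqrt (2 * Real.pi) := Real.sqrt_pos.mpr (by positivity)
  set c : ℝ := 1 / Real.sqrt (2 * Real.pi) with hcdef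
  have hcpos : 0 < c := by positivity
  have hf : IntegrableOn (fun η : ℝ => c * Real.exp (-η ^ 2 / 2)) (Set.Ioi x) := by
    have := (hint.const_mul c).integrableOn (s := Set.Ioi x)
    convert this using 2 with η
    ring_nf
  have hg : IntegrableOn (fun η : ℝ => c * Real.exp (-x ^ 2 / 2) * Real.exp (-(η - x) ^ 2 / 2))
      (Set.Ioi x) := by
    have h1 : Integrable (fun η : ℝ => Real.exp (-(1/2) * (η - x) ^ 2)) := hint.comp_sub_right x
    have := (h1.const_mul (c * Real.exp (-x ^ 2 / 2))).integrableOn (s := Set.Ioi x)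
    convert this using 2 with η
    ring_nf
  have hmono : gaussQ x ≤ ∫ η in Set.Ioi x,
      c * Real.exp (-x ^ 2 / 2) * Real.exp (-(η - x) ^ 2 / 2) := by
    refine setIntegral_mono_on hf hg measurableSet_Ioi ?_
    intro η hη
    have hη' : x < η := hη
    have hle : -η ^ 2 / 2 ≤ -x ^ 2 / 2 + -(η - x) ^ 2 / 2 := by nlinarith
    calc c * Real.exp (-η ^ 2 / 2) ≤ c * Real.exp (-x ^ 2 / 2 + -(η - x) ^ 2 / 2) := by
          exact mul_le_mul_of_nonneg_left (Real.exp_le_exp.mpr hle) hcpos.le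
      _ = c * Real.exp (-x ^ 2 / 2) * Real.exp (-(η - x) ^ 2 / 2) := by
          rw [Real.exp_add]; ring
  have hshift : (∫ η in Set.Ioi x, Real.exp (-(η - x) ^ 2 / 2))
      = ∫ t in Set.Ioi (0:ℝ), Real.exp (-t ^ 2 / 2) := by
    have hmap : Measure.map (fun t : ℝ => t + x) volume = volume :=
      Measure.IsAddRightInvariant.map_add_right_eq_self x
    have hemb : MeasurableEmbedding (fun t : ℝ => t + x) :=
      (Homeomorph.addRight x).measurableEmbedding
    have hpre : (fun t : ℝ => t + x) ⁻¹' Set.Ioi x = Set.Ioi 0 := by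
      ext t; simp [Set.mem_Ioi]
    nth_rewrite 1 [← hmap]
    rw [hemb.setIntegral_map, hpre]
    simp
  have hval : (∫ t in Set.Ioi (0:ℝ), Real.exp (-t ^ 2 / 2)) = Real.sqrt (2 * Real.pi) / 2 := by
    have := integral_gaussian_Ioi (1/2)
    have heq : (∫ t in Set.Ioi (0:ℝ), Real.exp (-t ^ 2 / 2))
        = ∫ t in Set.Ioi (0:ℝ), Real.exp (-(1/2) * t ^ 2) := by
      congr 1; ext t; ring_nf
    rw [heq, this]
    rw [show Real.pi / (1/2) = 2 * Real.pi by ring]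
  calc gaussQ x ≤ ∫ η in Set.Ioi x, c * Real.exp (-x ^ 2 / 2) * Real.exp (-(η - x) ^ 2 / 2) := hmono
    _ = c * Real.exp (-x ^ 2 / 2) * ∫ η in Set.Ioi x, Real.exp (-(η - x) ^ 2 / 2) := by
        rw [integral_const_mul]
    _ = c * Real.exp (-x ^ 2 / 2) * (Real.sqrt (2 * Real.pi) / 2) := by rw [hshift, hval]
    _ = 0.5 * Real.exp (-x ^ 2 / 2) := by
        have hcs : c * Real.sqrt (2 * Real.pi) = 1 := by
          rw [hcdef, one_div, inv_mul_cancel₀ hc.ne']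
        linear_combination (Real.exp (-x ^ 2 / 2) / 2) * hcs


lemma hα₁pos (γb ζ₁ ζ₂ α₁ : ℝ) (hγ : 0 < γb)
    (h₁ : ζ₁ = (Real.sqrt 3 + 1 - Real.sqrt 2) / 2)
    (h₂ : ζ₂ = (Real.sqrt 2 + 1 - Real.sqrt 3) / 2)
    (hα : α₁ = ζ₁ ^ 2 + ζ₂ ^ 2 - Real.sqrt 2 * ζ₁ * ζ₂) : 0 < α₁ := by
  have hs2 : (0:ℝ) ≤ Real.sqrt 2 := Real.sqrt_nonneg 2
  have hs3 : (0:ℝ) ≤ Real.sqrt 3 := Real.sqrt_nonneg 3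
  have hs2lt : Real.sqrt 2 < 3/2 := by
    nlinarith [Real.sq_sqrt (show (0:ℝ) ≤ 2 by norm_num)]
  have hs3lt : Real.sqrt 3 < 2 := by
    nlinarith [Real.sq_sqrt (show (0:ℝ) ≤ 3 by norm_num)]
  have hs2gt : 1 < Real.sqrt 2 := by
    nlinarith [Real.sq_sqrt (show (0:ℝ) ≤ 2 by norm_num)]
  have hs32 : Real.sqrt 2 < Real.sqrt 3 := by
    apply Real.sqrt_lt_sqrt <;> norm_num
  have hζ₁ : 0 < ζ₁ := by rw [h₁]; nlinarith
  have hζ₂ : 0 < ζ₂ := by rw [h₂]; nlinarith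
  have heq : α₁ = (ζ₁ - ζ₂) ^ 2 + (2 - Real.sqrt 2) * (ζ₁ * ζ₂) := by rw [hα]; ring
  rw [heq]
  have h1 : 0 < (2 - Real.sqrt 2) * (ζ₁ * ζ₂) :=
    mul_pos (by linarith) (mul_pos hζ₁ hζ₂)
  nlinarith [sq_nonneg (ζ₁ - ζ₂)]

/-- with blocked direct link, α₁ = ζ₁² + ζ₂² − √2 ζ₁ζ₂ > 0, the BER gain
0.5 − Q(√(α₁ γ_b N²)) is at least 0.5 − 0.5 e^{−α₁γ_b N²/2} for every N > 0, and it
tends to 0.5 as N → ∞. -/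
theorem performance_gain (γb ζ₁ ζ₂ α₁ : ℝ) (hγ : 0 < γb)
    (h₁ : ζ₁ = (Real.sqrt 3 + 1 - Real.sqrt 2) / 2)
    (h₂ : ζ₂ = (Real.sqrt 2 + 1 - Real.sqrt 3) / 2)
    (hα : α₁ = ζ₁ ^ 2 + ζ₂ ^ 2 - Real.sqrt 2 * ζ₁ * ζ₂) :
    0 < α₁ ∧
    (∀ N : ℝ, 0 < N →
      0.5 - gaussQ (Real.sqrt (α₁ * γb * N ^ 2))
        ≥ 0.5 - 0.5 * Real.exp (-(α₁ * γb * N ^ 2) / 2)) ∧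
    Tendsto (fun N : ℝ => 0.5 - gaussQ (Real.sqrt (α₁ * γb * N ^ 2)))
      atTop (nhds 0.5) := by
  constructor
  · exact hα₁pos γb ζ₁ ζ₂ α₁ hγ h₁ h₂ hα
  constructor
  · intro N hN
    have hy : 0 ≤ α₁ * γb * N ^ 2 := by
      have : 0 < α₁ := hα₁pos γb ζ₁ ζ₂ α₁ hγ h₁ h₂ hα
      positivity
    have hQ := gaussQ_le (Real.sqrt (α₁ * γb * N ^ 2)) (Real.sqrt_nonneg _)
    rw [Real.sq_sqrt hy] at hQ
    linarith
  · have hα₁ : 0 < α₁ := hα₁pos γb ζ₁ ζ₂ α₁ hγ h₁ h₂ hα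
    have key : Tendsto (fun N : ℝ => gaussQ (Real.sqrt (α₁ * γb * N ^ 2))) atTop (nhds 0) := by
      apply squeeze_zero (fun N => gaussQ_nonneg _)
        (g := fun N : ℝ => 0.5 * Real.exp (-(α₁ * γb * N ^ 2) / 2))
      · intro N
        have hy : 0 ≤ α₁ * γb * N ^ 2 := by positivity
        have hQ := gaussQ_le (Real.sqrt (α₁ * γb * N ^ 2)) (Real.sqrt_nonneg _)
        rw [Real.sq_sqrt hy] at hQ
        exact hQ
      · have h1 : Tendsto (fun N : ℝ => α₁ * γb * N ^ 2) atTop atTop := by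
          exact (tendsto_pow_atTop (by norm_num)).const_mul_atTop (by positivity)
        have h2 : Tendsto (fun N : ℝ => -(α₁ * γb * N ^ 2) / 2) atTop atBot := by
          apply Tendsto.atBot_div_const (by norm_num)
          exact tendsto_neg_atBot_iff.mpr h1
        have h3 := Real.tendsto_exp_atBot.comp h2
        have := h3.const_mul (0.5 : ℝ)
        simpa using this
    have h := Tendsto.sub ((tendsto_const_nhds : Tendsto (fun _ : ℝ => (0.5:ℝ)) atTop (nhds 0.5))) key
    simpa using h
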